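/- arXiv:1505.03645 — 2 statements merged into one kernel-verified Lean document; each statement's English description precedes it below -/
import Mathlib

section
/- Assume μ > 1 and μλ − μ − λ > 0 (so also λ > 0). Then H_{μλ} has no even eigenvalue in (−∞, 0); moreover, if z_μ > 2 is an even eigenvalue of H_{μ0} and z_λ > 2 is an even eigenvalue of H_{0λ}, then there exist even eigenvalues ζ₁ and ζ₂ of H_{μλ} such that 2 < ζ₁ < min(z_μ, z_λ) ≤ max(z_μ, z_λ) < ζ₂. -/
open MeasureTheory Real Filter Topology

/-- The potential `v(0) = μ`, `v(±1) = λ/2`, `v(x) = 0` for `|x| > 1`. -/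
noncomputable def pot (μ lam : ℝ) (x : ℤ) : ℝ :=
  if x = 0 then μ else if x = 1 ∨ x = -1 then lam / 2 else 0

/-- A real number `z` is an *even eigenvalue* of the discrete Schrödinger operator
`H_{μλ}` on `ℓ²(ℤ; ℂ)`, `(H_{μλ}ψ)(x) = ψ(x) − (ψ(x+1) + ψ(x−1))/2 + v(x)ψ(x)`,
if there is a nonzero even `ψ ∈ ℓ²(ℤ; ℂ)` with `H_{μλ}ψ = zψ`. -/
def IsEvenEigenvalue (μ lam z : ℝ) : Prop :=
  ∃ ψ : lp (fun _ : ℤ => ℂ) 2, ψ ≠ 0 ∧ (∀ x : ℤ, ψ (-x) = ψ x) ∧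
    ∀ x : ℤ, ψ x - (ψ (x + 1) + ψ (x - 1)) / 2 + (pot μ lam x : ℂ) * ψ x = (z : ℂ) * ψ x

lemma no_neg (μ lam z : ℝ) (hμ : 0 ≤ μ) (hlam : 0 ≤ lam) (hz : z < 0) :
    ¬ IsEvenEigenvalue μ lam z := by
  rintro ⟨ψ, hψ0, -, heq⟩
  have hpot : ∀ x : ℤ, 0 ≤ pot μ lam x := by
    intro x; unfold pot; split_ifs <;> linarith
  obtain ⟨a, ha⟩ : ∃ a, ψ a ≠ 0 := by
    by_contra hc; push_neg at hc
    exact hψ0 (lp.eq_zero_iff_coeFn_eq_zero.mpr (funext hc))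
  have hsum : Summable fun x : ℤ => ‖ψ x‖ ^ (2:ℝ) := by
    simpa using (lp.memℓp ψ).summable (p := 2) (by norm_num)
  have haN : 0 < ‖ψ a‖ := norm_pos_iff.mpr ha
  have hev : ∀ᶠ x in cofinite, ‖ψ x‖ ^ (2:ℝ) < ‖ψ a‖ ^ (2:ℝ) :=
    hsum.tendsto_cofinite_zero.eventually_lt_const (by positivity)
  have hfin : {x : ℤ | ‖ψ a‖ ≤ ‖ψ x‖}.Finite := by
    refine (Filter.eventually_cofinite.mp hev).subset ?_
    intro x hx
    simp only [Set.mem_setOf_eq, not_lt]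
    exact Real.rpow_le_rpow (norm_nonneg _) hx (by norm_num)
  obtain ⟨x₀, hx₀mem, hx₀max⟩ := hfin.toFinset.exists_max_image (fun x => ‖ψ x‖)
    ⟨a, by simp⟩
  have hglob : ∀ x, ‖ψ x‖ ≤ ‖ψ x₀‖ := by
    intro x
    by_cases hx : ‖ψ a‖ ≤ ‖ψ x‖
    · exact hx₀max x (by simpa using hx)
    · have := hx₀max a (by simp)
      push_neg at hx
      linarith
  have hM : 0 < ‖ψ x₀‖ := lt_of_lt_of_le haN (hx₀max a (by simp))
  have hkey : ((1 + pot μ lam x₀ - z : ℝ) : ℂ) * ψ x₀ = (ψ (x₀+1) + ψ (x₀-1))/2 := by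
    have := heq x₀
    push_cast
    ring_nf
    ring_nf at this
    rw [add_comm 1 x₀, neg_add_eq_sub]
    linear_combination this
  have hnorm : (1 + pot μ lam x₀ - z) * ‖ψ x₀‖ ≤ ‖ψ x₀‖ := by
    have h1 : ‖((1 + pot μ lam x₀ - z : ℝ) : ℂ) * ψ x₀‖ = (1 + pot μ lam x₀ - z) * ‖ψ x₀‖ := by
      rw [norm_mul, Complex.norm_real, Real.norm_eq_abs, abs_of_pos (by have := hpot x₀; linarith)]
    calc (1 + pot μ lam x₀ - z) * ‖ψ x₀‖ = ‖(ψ (x₀+1) + ψ (x₀-1))/2‖ := by rw [← h1, hkey]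
      _ ≤ (‖ψ (x₀+1)‖ + ‖ψ (x₀-1)‖)/2 := by
          rw [norm_div]
          apply div_le_div_of_nonneg_right (norm_add_le _ _) ?_ |>.trans
          · norm_num
          · norm_num
      _ ≤ ‖ψ x₀‖ := by have := hglob (x₀+1); have := hglob (x₀-1); linarith
  have h6 := hpot x₀
  have h7 := mul_lt_mul_of_pos_right
    (show (1:ℝ) < 1 + pot μ lam x₀ - z by linarith) hM
  rw [one_mul] at h7
  linarith

lemma hrw (y : ℝ) : ‖(y:ℂ)‖ ^ (2:ℝ) = y^2 := by
  rw [Complex.norm_real, Real.norm_eq_abs, show (2:ℝ) = ((2:ℕ):ℝ) by norm_num,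
    Real.rpow_natCast, sq_abs]

lemma model_mem (r c : ℝ) (h1 : -1 < r) (h0 : r < 0) :
    Memℓp (fun x : ℤ => (((if x = 0 then c else r ^ x.natAbs : ℝ)) : ℂ)) 2 := by
  apply memℓp_gen
  have h2 : (2 : ENNReal).toReal = 2 := by norm_num
  rw [h2]
  have key : ∀ x : ℤ, ‖(((if x = 0 then c else r ^ x.natAbs : ℝ)) : ℂ)‖ ^ (2:ℝ)
      = (if x = 0 then c^2 else (r^2) ^ x.natAbs) := by
    intro x
    rw [hrw]
    split_ifs
    · rfl
    · rw [← pow_mul, mul_comm, pow_mul]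
  have hgeo : Summable (fun n : ℕ => (r^2)^n) := by
    apply summable_geometric_of_lt_one (by positivity) (by nlinarith)
  have hx : ∀ m : ℕ, 1 ≤ m →
      (if (m:ℤ) = 0 then c^2 else (r^2) ^ ((m:ℤ)).natAbs) = (r^2)^m := by
    intro m hm
    have hm0 : (m:ℤ) ≠ 0 := by exact_mod_cast Nat.one_le_iff_ne_zero.mp hm
    rw [if_neg hm0, Int.natAbs_natCast]
  have hgeo1 : Summable (fun n : ℕ => (r^2)^(n+1)) := by
    refine (hgeo.mul_left (r^2)).congr fun n => ?_
    rw [← pow_succ']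
  have hnat : Summable (fun n : ℕ => (if (n:ℤ) = 0 then c^2 else (r^2) ^ ((n:ℤ)).natAbs)) :=
    (summable_nat_add_iff 1).mp (hgeo1.congr fun n => (hx (n+1) (by omega)).symm)
  have hneg : Summable (fun n : ℕ => (if (-n:ℤ) = 0 then c^2 else (r^2) ^ ((-n:ℤ)).natAbs)) := by
    refine hnat.congr fun n => ?_
    simp [neg_eq_zero, Int.natAbs_neg]
  exact (Summable.of_nat_of_neg (f := fun x : ℤ => if x = 0 then c^2 else (r^2)^x.natAbs) hnat hneg).congr
    fun x => (key x).symm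

lemma construct (μ lam r : ℝ) (hr1 : -1 < r) (hr0 : r < 0)
    (hrel : (1 + lam*r) * (μ + (r + 1/r)/2) = r) :
    IsEvenEigenvalue μ lam (1 - (r + 1/r)/2) := by
  set z : ℝ := 1 - (r + 1/r)/2 with hzdef
  have hrne : r ≠ 0 := ne_of_lt hr0
  set g : ℤ → ℝ := fun x => if x = 0 then 1 + lam*r else r ^ x.natAbs with hgdef
  -- key real identities
  have hid : r^2 + 1 = 2*(1-z)*r := by
    rw [hzdef]; field_simp; ring
  have hrel' : (1 + lam*r) * (μ + 1 - z) = r := by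
    rw [hzdef]; linear_combination hrel
  -- evenness of g and pot
  have hg_even : ∀ x : ℤ, g (-x) = g x := by
    intro x; simp only [hgdef, neg_eq_zero, Int.natAbs_neg]
  have hpot_even : ∀ x : ℤ, pot μ lam (-x) = pot μ lam x := by
    intro x; unfold pot
    split_ifs <;> first | rfl | omega
  -- real equation
  have main : ∀ x : ℤ, 0 ≤ x →
      g x - (g (x+1) + g (x-1))/2 + pot μ lam x * g x = z * g x := by
    intro x hx
    obtain ⟨n, rfl⟩ : ∃ n : ℕ, x = (n : ℤ) := ⟨x.toNat, (Int.toNat_of_nonneg hx).symm⟩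
    match n with
    | 0 =>
      have e0 : g 0 = 1 + lam*r := by simp [hgdef]
      have e1 : g 1 = r := by norm_num [hgdef]
      have em1 : g (-1) = r := by rw [hg_even]; exact e1
      have ep : pot μ lam 0 = μ := by simp [pot]
      push_cast
      rw [e0, e1, em1, ep]
      linear_combination hrel'
    | 1 =>
      have e1 : g 1 = r := by norm_num [hgdef]
      have e2 : g 2 = r^2 := by norm_num [hgdef]
      have e0 : g 0 = 1 + lam*r := by simp [hgdef]
      have ep : pot μ lam 1 = lam/2 := by norm_num [pot]
      push_cast
      rw [e1, e2, e0, ep]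
      linear_combination (-(1:ℝ)/2) * hid
    | (m+2) =>
      have ha : ∀ k : ℕ, 1 ≤ k → g (k : ℤ) = r ^ k := by
        intro k hk
        have : (k:ℤ) ≠ 0 := by exact_mod_cast Nat.one_le_iff_ne_zero.mp hk
        simp only [hgdef, if_neg this, Int.natAbs_natCast]
      have e1 : g ((m+2:ℕ) : ℤ) = r^(m+2) := ha (m+2) (by omega)
      have e2 : g (((m+2:ℕ) : ℤ)+1) = r^(m+3) := by
        rw [show (((m+2:ℕ) : ℤ)+1) = ((m+3:ℕ):ℤ) by push_cast; ring]; exact ha (m+3) (by omega)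
      have e3 : g (((m+2:ℕ) : ℤ)-1) = r^(m+1) := by
        rw [show (((m+2:ℕ) : ℤ)-1) = ((m+1:ℕ):ℤ) by push_cast; ring]; exact ha (m+1) (by omega)
      have ep : pot μ lam ((m+2:ℕ) : ℤ) = 0 := by
        unfold pot
        rw [if_neg (by omega), if_neg (by omega)]
      rw [e1, e2, e3, ep]
      linear_combination (-(r:ℝ)^(m+1)/2) * hid
  have hreal : ∀ x : ℤ, g x - (g (x+1) + g (x-1))/2 + pot μ lam x * g x = z * g x := by
    intro x
    rcases le_or_gt 0 x with hx | hx
    · exact main x hx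
    · have hy := main (-x) (by omega)
      rw [hg_even, hpot_even] at hy
      have e1 : g (-x + 1) = g (x - 1) := by
        rw [show (-x + 1) = -(x-1) by ring, hg_even]
      have e2 : g (-x - 1) = g (x + 1) := by
        rw [show (-x - 1) = -(x+1) by ring, hg_even]
      rw [e1, e2] at hy
      linarith
  -- build ψ
  refine ⟨⟨fun x : ℤ => ((g x : ℝ) : ℂ), model_mem r (1+lam*r) hr1 hr0⟩, ?_, ?_, ?_⟩
  · intro hcontra
    have : ((g 1 : ℝ) : ℂ) = 0 := by
      have := congrFun (lp.eq_zero_iff_coeFn_eq_zero.mp hcontra) 1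
      simpa using this
    have h1 : g 1 = r := by norm_num [hgdef]
    rw [h1] at this
    exact hrne (by exact_mod_cast this)
  · intro x
    show ((g (-x) : ℝ) : ℂ) = ((g x : ℝ) : ℂ)
    rw [hg_even]
  · intro x
    show ((g x : ℝ):ℂ) - (((g (x+1) : ℝ):ℂ) + ((g (x-1) : ℝ):ℂ))/2 + (pot μ lam x : ℂ) * ((g x : ℝ):ℂ)
      = ((z:ℝ):ℂ) * ((g x : ℝ):ℂ)
    have := hreal x
    push_cast
    exact_mod_cast congrArg (fun y : ℝ => (y : ℂ)) this

lemma extract (μ lam z : ℝ) (hz : 2 < z) (hev : IsEvenEigenvalue μ lam z) :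
    ∃ r : ℝ, -1 < r ∧ r < 0 ∧ r + 1/r = 2*(1-z) ∧
      (1 + lam*r) * (μ + (r + 1/r)/2) = r := by
  obtain ⟨ψ, hψ0, heven, heq⟩ := hev
  set t : ℝ := 1 - z with htdef
  have ht : t < -1 := by rw [htdef]; linarith
  have hd : 0 < t^2 - 1 := by nlinarith
  set q : ℝ := Real.sqrt (t^2 - 1) with hqdef
  have hq0 : 0 < q := Real.sqrt_pos.mpr hd
  have hqsq : q^2 = t^2 - 1 := Real.sq_sqrt hd.le
  set r : ℝ := t + q with hrdef
  set s : ℝ := t - q with hsdef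
  have hqlt : q < -t := by nlinarith
  have hr0 : r < 0 := by rw [hrdef]; linarith
  have hr1 : -1 < r := by
    have h1 : (-(t+1))^2 < q^2 := by nlinarith
    have h2 : -(t+1) < q := by nlinarith
    rw [hrdef]; linarith
  have hrs : r * s = 1 := by rw [hrdef, hsdef]; nlinarith
  have hrsum : r + s = 2*t := by rw [hrdef, hsdef]; ring
  have hrne : r ≠ 0 := ne_of_lt hr0
  have hs1 : s < -1 := by rw [hsdef]; linarith
  have hsne : s ≠ 0 := by linarith
  have hsval : s = 1/r := by field_simp; linarith [hrs]
  have hsum13 : r + 1/r = 2*(1-z) := by rw [← hsval, hrsum, htdef]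
  have hrR : r^2 = 2*t*r - 1 := by linear_combination r*hrsum - hrs
  have hsR : s^2 = 2*t*s - 1 := by linear_combination s*hrsum - hrs
  have hrC : (r:ℂ)^2 = 2*(t:ℂ)*(r:ℂ) - 1 := by exact_mod_cast hrR
  have hsC : (s:ℂ)^2 = 2*(t:ℂ)*(s:ℂ) - 1 := by exact_mod_cast hsR
  have htC : ((t:ℝ):ℂ) = 1 - (z:ℂ) := by rw [htdef]; push_cast; ring
  -- recurrence
  have hrec : ∀ n : ℕ, ψ ((n:ℤ)+3) = 2*(t:ℂ)*ψ ((n:ℤ)+2) - ψ ((n:ℤ)+1) := by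
    intro n
    have hp : pot μ lam ((n:ℤ)+2) = 0 := by
      unfold pot; rw [if_neg (by omega), if_neg (by omega)]
    have h2 := heq ((n:ℤ)+2)
    rw [hp] at h2
    rw [show ((n:ℤ)+2+1) = (n:ℤ)+3 by ring, show ((n:ℤ)+2-1) = (n:ℤ)+1 by ring] at h2
    push_cast at h2
    linear_combination (-2:ℂ)*h2 - 2*(ψ ((n:ℤ)+2))*htC
  -- A, B
  have hrCne : (r:ℂ) ≠ 0 := by exact_mod_cast hrne
  have hsCne : (s:ℂ) ≠ 0 := by exact_mod_cast hsne
  have hrsne : (r:ℂ) - (s:ℂ) ≠ 0 := by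
    rw [sub_ne_zero]
    exact_mod_cast (by nlinarith : r ≠ s)
  set A : ℂ := (ψ (3:ℤ) - (s:ℂ)*ψ (2:ℤ))/((r:ℂ)^2*((r:ℂ)-(s:ℂ))) with hAdef
  set B : ℂ := (ψ (3:ℤ) - (r:ℂ)*ψ (2:ℤ))/((s:ℂ)^2*((s:ℂ)-(r:ℂ))) with hBdef
  have hsrne : (s:ℂ) - (r:ℂ) ≠ 0 := by
    intro hc; apply hrsne; linear_combination -hc
  have key : ∀ n : ℕ, ψ ((n:ℤ)+2) = A*(r:ℂ)^(n+2) + B*(s:ℂ)^(n+2)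
      ∧ ψ ((n:ℤ)+3) = A*(r:ℂ)^(n+3) + B*(s:ℂ)^(n+3) := by
    intro n
    induction n with
    | zero =>
      constructor
      · show ψ ((0:ℤ)+2) = _
        rw [show ((0:ℤ)+2) = 2 by ring, hAdef, hBdef]
        field_simp
        ring
      · show ψ ((0:ℤ)+3) = _
        rw [show ((0:ℤ)+3) = 3 by ring, hAdef, hBdef]
        field_simp
        ring
    | succ m ih =>
      obtain ⟨ih1, ih2⟩ := ih
      have c1 : ((m+1:ℕ):ℤ)+2 = (m:ℤ)+3 := by push_cast; ring
      have c2 : ((m+1:ℕ):ℤ)+3 = (m:ℤ)+4 := by push_cast; ring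
      constructor
      · rw [c1, ih2]
      · rw [c2]
        have hr4 : ψ ((m:ℤ)+4) = 2*(t:ℂ)*ψ ((m:ℤ)+3) - ψ ((m:ℤ)+2) := by
          have := hrec (m+1)
          rw [show ((m+1:ℕ):ℤ)+3 = (m:ℤ)+4 by push_cast; ring,
            show ((m+1:ℕ):ℤ)+2 = (m:ℤ)+3 by push_cast; ring,
            show ((m+1:ℕ):ℤ)+1 = (m:ℤ)+2 by push_cast; ring] at this
          exact this
        rw [hr4]
        linear_combination 2*(t:ℂ)*ih2 - ih1 - A*(r:ℂ)^(m+2)*hrC - B*(s:ℂ)^(m+2)*hsC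
  -- tendsto
  have hsum : Summable fun x : ℤ => ‖ψ x‖ ^ (2:ℝ) := by
    simpa using (lp.memℓp ψ).summable (p := 2) (by norm_num)
  have hsumN : Summable fun n : ℕ => ‖ψ (n:ℤ)‖ ^ (2:ℝ) :=
    hsum.comp_injective (fun a b hab => by exact_mod_cast hab)
  have hTsq : Tendsto (fun n : ℕ => ‖ψ (n:ℤ)‖ ^ (2:ℝ)) atTop (𝓝 0) :=
    hsumN.tendsto_atTop_zero
  have hsqr : ∀ n : ℕ, Real.sqrt (‖ψ (n:ℤ)‖ ^ (2:ℝ)) = ‖ψ (n:ℤ)‖ := by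
    intro n
    rw [show (2:ℝ) = ((2:ℕ):ℝ) by norm_num, Real.rpow_natCast, Real.sqrt_sq (norm_nonneg _)]
  have hTn : Tendsto (fun n : ℕ => ‖ψ (n:ℤ)‖) atTop (𝓝 0) := by
    have h0 := (Real.continuous_sqrt.tendsto 0).comp hTsq
    rw [Real.sqrt_zero] at h0
    exact h0.congr hsqr
  have hT : Tendsto (fun n : ℕ => ψ (n:ℤ)) atTop (𝓝 0) := by
    rw [tendsto_zero_iff_norm_tendsto_zero]
    exact hTn
  -- B = 0
  have hrnorm : ‖(r:ℂ)‖ < 1 := by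
    rw [Complex.norm_real, Real.norm_eq_abs, abs_lt]
    constructor <;> linarith
  have hψshift : Tendsto (fun n : ℕ => ψ ((n:ℤ)+2)) atTop (𝓝 0) := by
    have := hT.comp (tendsto_add_atTop_nat 2)
    refine this.congr fun n => ?_
    simp only [Function.comp]
    norm_cast
  have hAr : Tendsto (fun n : ℕ => A*(r:ℂ)^(n+2)) atTop (𝓝 0) := by
    have h1 := tendsto_pow_atTop_nhds_zero_of_norm_lt_one hrnorm
    have h2 := h1.const_mul (A*(r:ℂ)^2)
    rw [mul_zero] at h2
    refine h2.congr fun n => ?_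
    ring
  have hBs : Tendsto (fun n : ℕ => B*(s:ℂ)^(n+2)) atTop (𝓝 0) := by
    have h3 := hψshift.sub hAr
    rw [sub_zero] at h3
    refine h3.congr fun n => ?_
    rw [(key n).1]
    ring
  have hB : B = 0 := by
    by_contra hB0
    have hBpos : 0 < ‖B‖ := norm_pos_iff.mpr hB0
    have h4 := hBs.norm
    rw [norm_zero] at h4
    obtain ⟨n, hn⟩ := (h4.eventually_lt_const hBpos).exists
    have h5 : ‖B*(s:ℂ)^(n+2)‖ = ‖B‖ * ‖(s:ℂ)‖^(n+2) := by
      rw [norm_mul, norm_pow]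
    have h6 : (1:ℝ) ≤ ‖(s:ℂ)‖ := by
      rw [Complex.norm_real, Real.norm_eq_abs]
      rw [abs_of_neg (by linarith)]
      linarith
    have h7 : (1:ℝ) ≤ ‖(s:ℂ)‖^(n+2) := one_le_pow₀ h6
    rw [h5] at hn
    have h8 := mul_le_mul_of_nonneg_left h7 (le_of_lt hBpos)
    rw [mul_one] at h8
    linarith
  -- ψ values
  have hψn : ∀ n : ℕ, ψ ((n:ℤ)+2) = A*(r:ℂ)^(n+2) := by
    intro n
    rw [(key n).1, hB]
    ring
  have hψ2 : ψ (2:ℤ) = A*(r:ℂ)^2 := by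
    have := hψn 0
    rw [show ((0:ℕ):ℤ)+2 = 2 by norm_num] at this
    simpa using this
  have hψ3 : ψ (3:ℤ) = A*(r:ℂ)^3 := by
    have := hψn 1
    rw [show ((1:ℕ):ℤ)+2 = 3 by norm_num] at this
    simpa using this
  -- ψ 1
  have h2 := heq 2
  rw [show pot μ lam 2 = 0 by unfold pot; rw [if_neg (by omega), if_neg (by omega)],
    show ((2:ℤ)+1) = 3 by ring, show ((2:ℤ)-1) = 1 by ring] at h2
  push_cast at h2
  have hψ1 : ψ (1:ℤ) = A*(r:ℂ) := by
    have hstep : ψ (1:ℤ) = 2*(t:ℂ)*ψ (2:ℤ) - ψ (3:ℤ) := by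
      linear_combination (-2:ℂ)*h2 - 2*(ψ (2:ℤ))*htC
    rw [hstep, hψ2, hψ3]
    linear_combination (-(A*(r:ℂ)))*hrC
  -- ψ 0
  have h1 := heq 1
  rw [show pot μ lam 1 = lam/2 by unfold pot; rw [if_neg (by omega), if_pos (by omega)],
    show ((1:ℤ)+1) = 2 by ring, show ((1:ℤ)-1) = 0 by ring] at h1
  push_cast at h1
  have hψ0' : ψ (0:ℤ) = A*(1 + (lam:ℂ)*(r:ℂ)) := by
    have hstep : ψ (0:ℤ) = (2*(t:ℂ) + (lam:ℂ))*ψ (1:ℤ) - ψ (2:ℤ) := by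
      linear_combination (-2:ℂ)*h1 - 2*(ψ (1:ℤ))*htC
    rw [hstep, hψ1, hψ2]
    linear_combination (-A)*hrC
  -- equation at 0
  have h0 := heq 0
  rw [show pot μ lam 0 = μ by unfold pot; rw [if_pos rfl],
    show ((0:ℤ)+1) = 1 by ring, show ((0:ℤ)-1) = -1 by ring, show ((-1:ℤ)) = -(1:ℤ) by ring,
    heven 1] at h0
  push_cast at h0
  have hfin : ((μ:ℂ)+(t:ℂ))*ψ (0:ℤ) = ψ (1:ℤ) := by
    linear_combination h0 + (ψ (0:ℤ))*htC
  -- A ≠ 0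
  have hA : A ≠ 0 := by
    intro hA0
    apply hψ0
    rw [lp.eq_zero_iff_coeFn_eq_zero]
    funext x
    have hzero : ∀ n : ℕ, ψ (n:ℤ) = 0 := by
      intro n
      match n with
      | 0 => rw [show ((0:ℕ):ℤ) = (0:ℤ) by norm_num, hψ0', hA0]; ring
      | 1 => rw [show ((1:ℕ):ℤ) = (1:ℤ) by norm_num, hψ1, hA0]; ring
      | (m+2) =>
        have := hψn m
        rw [show ((m:ℕ):ℤ)+2 = ((m+2:ℕ):ℤ) by push_cast; ring] at this
        rw [this, hA0]; ring
    show ψ x = 0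
    match x with
    | Int.ofNat n => exact hzero n
    | Int.negSucc n =>
      rw [show (Int.negSucc n) = -((n+1:ℕ):ℤ) by rfl, heven]
      exact hzero (n+1)
  -- conclude
  have hcomb : (((1+lam*r)*(μ+t) : ℝ):ℂ) * A = ((r:ℝ):ℂ) * A := by
    push_cast
    have := hfin
    rw [hψ0', hψ1] at this
    linear_combination this
  have hcomb2 : ((1+lam*r)*(μ+t) : ℝ) = r := by
    have := mul_right_cancel₀ hA hcomb
    exact_mod_cast this
  have hhalf : (r + 1/r)/2 = t := by
    rw [hsum13, htdef]; ring
  exact ⟨r, hr1, hr0, hsum13, by rw [hhalf]; linarith [hcomb2]⟩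


lemma zmono (a b : ℝ) (ha1 : -1 < a) (ha0 : a < 0) (hb0 : b < 0) (hab : a < b) :
    1 - (a+1/a)/2 < 1 - (b+1/b)/2 := by
  have hane : a ≠ 0 := ne_of_lt ha0
  have hbne : b ≠ 0 := ne_of_lt hb0
  have hab0 : 0 < a*b := mul_pos_of_neg_of_neg ha0 hb0
  have hab1 : a*b < 1 := by nlinarith
  have key : a + 1/a - (b + 1/b) = (a-b)*(a*b-1)/(a*b) := by field_simp; ring
  have hpos : 0 < (a-b)*(a*b-1)/(a*b) := div_pos (by nlinarith) hab0
  linarith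

lemma gcont (μ lam a b : ℝ) (hb : b < 0) :
    ContinuousOn (fun x : ℝ => (1+lam*x)*(μ+(x+1/x)/2) - x) (Set.Icc a b) := by
  apply ContinuousOn.sub ?_ continuousOn_id
  apply ContinuousOn.mul (by fun_prop)
  apply ContinuousOn.add continuousOn_const
  apply ContinuousOn.div_const
  apply ContinuousOn.add continuousOn_id
  apply ContinuousOn.div continuousOn_const continuousOn_id
  intro x hx
  exact ne_of_lt (lt_of_le_of_lt hx.2 hb)


set_option maxHeartbeats 1000000 in
/-- Region `G_{02}`: if `μ > 1` and `μλ − μ − λ > 0`, then `H_{μλ}` has no even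
eigenvalue in `(−∞, 0)`; moreover, if `z_μ > 2` is an even eigenvalue of `H_{μ0}` and
`z_λ > 2` is an even eigenvalue of `H_{0λ}`, then there exist even eigenvalues `ζ₁, ζ₂`
of `H_{μλ}` with `2 < ζ₁ < min(z_μ, z_λ) ≤ max(z_μ, z_λ) < ζ₂`. -/
theorem region_G02 (μ lam : ℝ) (hμ : 1 < μ) (h : 0 < μ * lam - μ - lam) :
    (∀ z : ℝ, z < 0 → ¬ IsEvenEigenvalue μ lam z) ∧
    ∀ zμ zlam : ℝ, 2 < zμ → IsEvenEigenvalue μ 0 zμ →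
      2 < zlam → IsEvenEigenvalue 0 lam zlam →
      ∃ ζ₁ ζ₂ : ℝ, IsEvenEigenvalue μ lam ζ₁ ∧ IsEvenEigenvalue μ lam ζ₂ ∧
        2 < ζ₁ ∧ ζ₁ < min zμ zlam ∧ max zμ zlam < ζ₂ := by
  have hlam1 : 1 < lam := by nlinarith
  have hlam0 : 0 < lam := by linarith
  constructor
  · intro z hz
    exact no_neg μ lam z (by linarith) (by linarith) hz
  intro zμ zlam hzμ hevμ hzlam hevlam
  obtain ⟨rμ, hrμ1, hrμ0, hrμe, hrμrel⟩ := extract μ 0 zμ hzμ hevμ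
  obtain ⟨rlam, hrlam1, hrlam0, hrlame, hrlamrel⟩ := extract 0 lam zlam hzlam hevlam
  have hμrel : μ + (rμ + 1/rμ)/2 = rμ := by linear_combination hrμrel
  have hlamrel : (1+lam*rlam)*((rlam+1/rlam)/2) = rlam := by linear_combination hrlamrel
  set g : ℝ → ℝ := fun x => (1+lam*x)*(μ+(x+1/x)/2) - x with hgdef
  have hgrμ : g rμ = lam*rμ^2 := by
    simp only [hgdef]
    linear_combination (1+lam*rμ)*hμrel
  have hgrμpos : 0 < g rμ := by
    rw [hgrμ]
    exact mul_pos hlam0 ((sq_nonneg rμ).lt_of_ne (Ne.symm (pow_ne_zero 2 (ne_of_lt hrμ0))))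
  have hclam : 0 < 1 + lam*rlam := by
    by_contra hc
    push_neg at hc
    have hinv : 1/rlam < 0 := one_div_neg.mpr hrlam0
    have h2 : 0 ≤ (1+lam*rlam) * ((rlam+1/rlam)/2) := by
      have h2a := mul_nonneg (neg_nonneg.mpr hc)
        (neg_nonneg.mpr (by linarith : (rlam+1/rlam)/2 ≤ 0))
      have h2b : (-(1+lam*rlam)) * (-((rlam+1/rlam)/2)) = (1+lam*rlam) * ((rlam+1/rlam)/2) := by
        ring
      rw [h2b] at h2a
      exact h2a
    rw [hlamrel] at h2
    linarith
  have hgrlam : g rlam = μ*(1+lam*rlam) := by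
    simp only [hgdef]
    linear_combination hlamrel
  have hgrlampos : 0 < g rlam := by rw [hgrlam]; exact mul_pos (by linarith) hclam
  have hgneg1 : g (-1) < 0 := by
    have e : g (-1) = -(μ*lam - μ - lam) := by simp only [hgdef]; norm_num; ring
    rw [e]; linarith
  -- package min/max
  have pack : ∃ rm rM : ℝ, -1 < rm ∧ rm ≤ rM ∧ rM < 0 ∧ 0 < g rm ∧ 0 < g rM ∧
      min zμ zlam = 1 - (rm+1/rm)/2 ∧ max zμ zlam = 1 - (rM+1/rM)/2 := by
    rcases le_total rμ rlam with hle | hle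
    · have hzle : zμ ≤ zlam := by
        rcases lt_or_eq_of_le hle with hlt | heq2
        · have := zmono rμ rlam hrμ1 hrμ0 hrlam0 hlt
          linarith
        · rw [heq2] at hrμe
          linarith
      exact ⟨rμ, rlam, hrμ1, hle, hrlam0, hgrμpos, hgrlampos,
        by rw [min_eq_left hzle]; linarith,
        by rw [max_eq_right hzle]; linarith⟩
    · have hzle : zlam ≤ zμ := by
        rcases lt_or_eq_of_le hle with hlt | heq2
        · have := zmono rlam rμ hrlam1 hrlam0 hrμ0 hlt
          linarith
        · rw [heq2] at hrlame
          linarith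
      exact ⟨rlam, rμ, hrlam1, hle, hrμ0, hgrlampos, hgrμpos,
        by rw [min_eq_right hzle]; linarith,
        by rw [max_eq_left hzle]; linarith⟩
  obtain ⟨rm, rM, hrm1, hrmM, hrM0, hgrm, hgrM, hminz, hmaxz⟩ := pack
  have hrm0 : rm < 0 := lt_of_le_of_lt hrmM hrM0
  have hrM1 : -1 < rM := lt_of_lt_of_le hrm1 hrmM
  -- first root
  obtain ⟨c, hcmem, hgc⟩ := intermediate_value_Icc (by linarith : (-1:ℝ) ≤ rm)
    (gcont μ lam (-1) rm hrm0) ⟨le_of_lt hgneg1, le_of_lt hgrm⟩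
  rw [← hgdef] at hgc
  have hc1 : -1 < c := by
    rcases lt_or_eq_of_le hcmem.1 with h' | h'
    · exact h'
    · exfalso; rw [← h'] at hgc; linarith
  have hclt : c < rm := by
    rcases lt_or_eq_of_le hcmem.2 with h' | h'
    · exact h'
    · exfalso; rw [h'] at hgc; linarith
  have hc0 : c < 0 := lt_trans hclt hrm0
  have hcne : c ≠ 0 := ne_of_lt hc0
  have hrelc : (1+lam*c)*(μ+(c+1/c)/2) = c := by
    have hgc' := hgc
    simp only [hgdef] at hgc'
    linarith
  have hevc := construct μ lam c hc1 hc0 hrelc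
  -- second root: find r₀ with g r₀ < 0
  set δ : ℝ := min (1/(2*lam)) (1/(2*(μ+2))) with hδdef
  have hδ0 : 0 < δ := lt_min (by positivity) (by positivity)
  set r₀ : ℝ := max (rM/2) (-δ) with hr₀def
  have hr₀0 : r₀ < 0 := max_lt (by linarith) (by linarith)
  have hr₀M : rM < r₀ := lt_of_lt_of_le (by linarith : rM < rM/2) (le_max_left _ _)
  have hr₀δ : -δ ≤ r₀ := le_max_right _ _
  have hδlam : δ ≤ 1/(2*lam) := min_le_left _ _
  have hδμ : δ ≤ 1/(2*(μ+2)) := min_le_right _ _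
  have hhalf : (1:ℝ)/(2*lam) < 1/2 := by
    apply one_div_lt_one_div_of_lt <;> linarith
  have hr₀half : -(1/2) < r₀ := by linarith
  have hr₀μ : -(1/(2*(μ+2))) ≤ r₀ := by linarith
  have hinvr₀ : 1/r₀ ≤ -(2*(μ+2)) := by
    have h1 := one_div_le_one_div_of_neg_of_le hr₀0 hr₀μ
    have h2 : (1:ℝ)/(-(1/(2*(μ+2)))) = -(2*(μ+2)) := by
      rw [one_div_neg_eq_neg_one_div]
      congr 1
      rw [one_div_one_div]
    rw [h2] at h1
    exact h1
  have hc₁ : 1/2 ≤ 1 + lam*r₀ := by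
    have h3 : lam * (-(1/(2*lam))) = -(1/2) := by field_simp
    have h4 : lam * (-(1/(2*lam))) ≤ lam * r₀ :=
      mul_le_mul_of_nonneg_left (by linarith) (le_of_lt hlam0)
    linarith
  have hm2 : μ + (r₀ + 1/r₀)/2 ≤ -2 := by linarith
  have hgr₀ : g r₀ < 0 := by
    have h5 : (1+lam*r₀)*(μ+(r₀+1/r₀)/2) ≤ (1/2)*(μ+(r₀+1/r₀)/2) :=
      mul_le_mul_of_nonpos_right hc₁ (by linarith)
    simp only [hgdef]
    linarith
  obtain ⟨d, hdmem, hgd⟩ := intermediate_value_Icc' (le_of_lt hr₀M)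
    (gcont μ lam rM r₀ hr₀0) ⟨le_of_lt hgr₀, le_of_lt hgrM⟩
  rw [← hgdef] at hgd
  have hdgt : rM < d := by
    rcases lt_or_eq_of_le hdmem.1 with h' | h'
    · exact h'
    · exfalso; rw [← h'] at hgd; linarith
  have hd0 : d < 0 := lt_of_le_of_lt hdmem.2 hr₀0
  have hd1 : -1 < d := lt_trans hrM1 hdgt
  have hreld : (1+lam*d)*(μ+(d+1/d)/2) = d := by
    have hgd' := hgd
    simp only [hgdef] at hgd'
    linarith
  have hevd := construct μ lam d hd1 hd0 hreld
  refine ⟨1 - (c + 1/c)/2, 1 - (d + 1/d)/2, hevc, hevd, ?_, ?_, ?_⟩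
  · -- 2 < ζ₁
    have hpos : 0 < (c+1)^2 := pow_pos (by linarith) 2
    have hkey : c + 1/c + 2 = (c+1)^2/c := by field_simp; ring
    have hneg : (c+1)^2/c < 0 := div_neg_of_pos_of_neg hpos hc0
    linarith
  · -- ζ₁ < min
    have := zmono c rm hc1 hc0 hrm0 hclt
    linarith
  · -- max < ζ₂
    have := zmono rM d hrM1 hrM0 hd0 hdgt
    linarith
end

section
/- Assume either μλ + μ + λ < 0 or (μλ + μ + λ = 0 and μ < −1), and assume μ < 1 and μλ − μ − λ ≥ 0. Then H_{μλ} has no even eigenvalue in (2, +∞), and it has exactly one even eigenvalue outside [0,2], which lies in (−∞, 0). -/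
open MeasureTheory Real Filter Topology

noncomputable def cubF (μ lam t : ℝ) : ℝ := (lam*t+1)*(t^2+2*μ*t+1) - 2*t^2

lemma lam_le_one {μ lam : ℝ} (h2 : μ < 1) (h3 : 0 ≤ μ * lam - μ - lam) : lam ≤ 1 := by
  nlinarith

lemma no_neg_root {μ lam : ℝ} (h2 : μ < 1) (h3 : 0 ≤ μ * lam - μ - lam)
    {t : ℝ} (ht0 : -1 < t) (ht1 : t < 0) : 0 < cubF μ lam t := by
  have hl1 : lam ≤ 1 := lam_le_one h2 h3
  set s : ℝ := -t with hs
  have hs0 : 0 < s := by simp [hs]; linarith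
  have hs1 : s < 1 := by simp [hs]; linarith
  have key1 : (1-μ)*(1-lam*s) - s ≥ (1-μ)*(1-s) := by nlinarith
  have key2 : (1:ℝ) - lam*s ≥ 1 - s := by nlinarith
  have : cubF μ lam t = (1-lam*s)*(1-s)^2 + 2*s*((1-μ)*(1-lam*s) - s) := by
    simp only [cubF, hs]; ring
  nlinarith [mul_pos hs0 (mul_pos (by linarith : (0:ℝ) < 1-μ) (by linarith : (0:ℝ) < 1-s))]

lemma exists_root {μ lam : ℝ}
    (h1 : μ * lam + μ + lam < 0 ∨ (μ * lam + μ + lam = 0 ∧ μ < -1)) :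
    ∃ t ∈ Set.Ioo (0:ℝ) 1, cubF μ lam t = 0 := by
  rcases h1 with hA | ⟨hA, hμ⟩
  · have hc : ContinuousOn (cubF μ lam) (Set.Icc (0:ℝ) 1) := by
      apply Continuous.continuousOn; unfold cubF; continuity
    have h0 : cubF μ lam 1 < 0 := by unfold cubF; nlinarith
    have h1' : (0:ℝ) < cubF μ lam 0 := by norm_num [cubF]
    have := intermediate_value_Ioo' (by norm_num : (0:ℝ) ≤ 1) hc
      (Set.mem_Ioo.2 ⟨h0, h1'⟩)
    obtain ⟨t, ht, hft⟩ := this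
    exact ⟨t, ht, hft⟩
  · -- A = 0 case: cubF = (t-1)*(lam t^2 + (lam+2 μ lam -1) t - 1)
    set q : ℝ → ℝ := fun t => lam*t^2 + (lam+2*μ*lam-1)*t - 1 with hq
    have hc : ContinuousOn q (Set.Icc (0:ℝ) 1) := by
      apply Continuous.continuousOn; simp only [hq]; continuity
    have hq0 : q 0 < 0 := by norm_num [hq]
    have hq1 : 0 < q 1 := by simp only [hq]; nlinarith
    obtain ⟨t, ht, hft⟩ := intermediate_value_Ioo (by norm_num : (0:ℝ) ≤ 1) hc
      (Set.mem_Ioo.2 ⟨hq0, hq1⟩)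
    refine ⟨t, ht, ?_⟩
    have : cubF μ lam t = (t-1) * q t + 2*(μ*lam + μ + lam) * t := by
      simp only [cubF, hq]; ring
    rw [this, hft, hA]; ring

lemma root_P_pos {μ lam : ℝ}
    (h1 : μ * lam + μ + lam < 0 ∨ (μ * lam + μ + lam = 0 ∧ μ < -1))
    {t : ℝ} (ht0 : 0 < t) (ht1 : t < 1) (hr : cubF μ lam t = 0) :
    0 < t^2 + 2*μ*t + 1 := by
  set P : ℝ := t^2 + 2*μ*t + 1 with hP
  rcases lt_trichotomy P 0 with hPneg | hP0 | hPpos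
  · exfalso
    -- μ < -1 necessarily (else P ≥ (1-t)^2 > 0)
    have hμ : μ < -1 := by nlinarith
    have hA : μ * lam + μ + lam ≤ 0 := by rcases h1 with h | ⟨h, _⟩ <;> linarith
    -- from root: lam*t*P = 2 t^2 - P
    have he : lam*t*P = 2*t^2 - P := by simp only [cubF, hP] at hr ⊢; nlinarith [hr]
    -- E := (μ+1)*(2t²-P) + μ*t*P = A * t * P and E = (t-1)*R, R = (-μ-1)*(-P)+t(1-t) > 0
    have hEeq : (μ+1)*(2*t^2-P) + μ*t*P = (μ*lam + μ + lam) * (t*P) := by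
      have : (μ*lam + μ + lam) * (t*P) = (μ+1)*(lam*t*P) + μ*(t*P) := by ring
      rw [this, he]; ring
    have hR : (0:ℝ) < (-μ-1)*(-P) + t*(1-t) := by
      have := mul_pos (by linarith : (0:ℝ) < -μ-1) (by linarith : (0:ℝ) < -P)
      nlinarith
    have hE : (μ+1)*(2*t^2-P) + μ*t*P < 0 := by
      have hid : (μ+1)*(2*t^2-P) + μ*t*P = (t-1)*((-μ-1)*(-P) + t*(1-t)) := by
        simp only [hP]; ring
      rw [hid]
      exact mul_neg_of_neg_of_pos (by linarith) hR
    -- A ≤ 0, t*P < 0 ⇒ A*(t*P) ≥ 0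
    have htP : t*P ≤ 0 := by nlinarith
    nlinarith [mul_nonneg (neg_nonneg.2 hA) (neg_nonneg.2 htP), hEeq, hE]
  · exfalso
    simp only [hP] at hP0
    simp only [cubF, hP0, mul_zero, zero_sub] at hr
    nlinarith [sq_nonneg t]
  · exact hPpos

lemma unique_root {μ lam : ℝ}
    (h1 : μ * lam + μ + lam < 0 ∨ (μ * lam + μ + lam = 0 ∧ μ < -1))
    {t₁ t₂ : ℝ} (h10 : 0 < t₁) (h11 : t₁ < 1) (h20 : 0 < t₂) (h21 : t₂ < 1)
    (hr1 : cubF μ lam t₁ = 0) (hr2 : cubF μ lam t₂ = 0) : t₁ = t₂ := by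
  have hP1 := root_P_pos h1 h10 h11 hr1
  have hP2 := root_P_pos h1 h20 h21 hr2
  by_contra hne
  -- identity: (t₂-t₁)*(P₁*P₂ - 2 t₁ t₂ (t₁ t₂ - 1)) = t₂*P₂*cubF t₁ - t₁*P₁*cubF t₂
  have hid : (t₂ - t₁) * ((t₁^2+2*μ*t₁+1)*(t₂^2+2*μ*t₂+1) - 2*t₁*t₂*(t₁*t₂-1))
      = t₂*(t₂^2+2*μ*t₂+1)*(cubF μ lam t₁) - t₁*(t₁^2+2*μ*t₁+1)*(cubF μ lam t₂) := by
    simp only [cubF]; ring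
  rw [hr1, hr2] at hid
  simp only [mul_zero, sub_zero, zero_sub, neg_zero] at hid
  have hfac : (t₁^2+2*μ*t₁+1)*(t₂^2+2*μ*t₂+1) - 2*t₁*t₂*(t₁*t₂-1) > 0 := by
    have h12 : t₁ * t₂ < 1 := by nlinarith
    nlinarith [mul_pos hP1 hP2, mul_pos (mul_pos h10 h20) (by linarith : (0:ℝ) < 1 - t₁*t₂)]
  rcases mul_eq_zero.1 hid with h | h
  · exact hne (by linarith)
  · linarith

noncomputable def evF (lam t : ℝ) : ℤ → ℂ := fun x =>
  if x.natAbs = 0 then ((lam + 1/t : ℝ) : ℂ) else (t : ℂ) ^ (x.natAbs - 1)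

lemma pot_neg (μ lam : ℝ) (x : ℤ) : pot μ lam (-x) = pot μ lam x := by
  unfold pot
  rcases eq_or_ne x 0 with h | h
  · simp [h]
  · rw [if_neg (by omega), if_neg h]
    by_cases h1 : x = 1 ∨ x = -1
    · rw [if_pos (by omega), if_pos h1]
    · rw [if_neg (by omega), if_neg h1]

lemma evF_even (lam t : ℝ) (x : ℤ) : evF lam t (-x) = evF lam t x := by
  simp [evF, Int.natAbs_neg]

lemma evF_memℓp {lam t : ℝ} (ht0 : 0 < t) (ht1 : t < 1) : Memℓp (evF lam t) 2 := by
  apply memℓp_gen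
  have htr : (2 : ENNReal).toReal = 2 := by norm_num
  rw [htr]
  set C : ℝ := (lam + 1/t)^2 + 1/t^2 with hC
  have hC0 : 0 < 1/t^2 := by positivity
  have hr1 : t^2 < 1 := by nlinarith
  have hbound : ∀ n : ℕ, ‖evF lam t (n : ℤ)‖ ^ (2:ℝ) ≤ C * (t^2)^n := by
    intro n
    have : ‖evF lam t (n:ℤ)‖ ^ (2:ℝ) = ‖evF lam t (n:ℤ)‖ ^ (2:ℕ) := by
      rw [← Real.rpow_natCast]; norm_num
    rw [this]
    rcases Nat.eq_zero_or_pos n with h | h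
    · subst h
      simp only [Nat.cast_zero, pow_zero, mul_one]
      rw [show evF lam t 0 = ((lam+1/t:ℝ):ℂ) from by simp [evF], Complex.norm_real, Real.norm_eq_abs, sq_abs]
      linarith
    · have hna : (n:ℤ).natAbs = n := Int.natAbs_natCast n
      simp only [evF, hna, if_neg (by omega : ¬ n = 0)]
      rw [norm_pow, Complex.norm_real]
      rw [Real.norm_eq_abs, abs_of_pos ht0]
      have : (t ^ (n-1))^2 = (t^2)^(n-1) := by ring
      rw [this]
      have he : (t^2)^(n-1) = (1/t^2) * (t^2)^n := by
        rw [← pow_sub_one_mul (by omega : n ≠ 0) (t^2)]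
        field_simp
      rw [he]
      have : (0:ℝ) ≤ (t^2)^n := by positivity
      have hnn : (lam + 1/t)^2 ≥ 0 := sq_nonneg _
      nlinarith
  have hgeom : Summable (fun n : ℕ => C * (t^2)^n) :=
    (summable_geometric_of_lt_one (by positivity) hr1).mul_left C
  apply Summable.of_nat_of_neg
  · exact hgeom.of_nonneg_of_le (fun n => by positivity) hbound
  · refine hgeom.of_nonneg_of_le (fun n => by positivity) (fun n => ?_)
    rw [evF_even]
    exact hbound n

lemma evF_val (lam t : ℝ) (n : ℕ) : evF lam t ((n:ℤ)+1) = (t:ℂ)^n := by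
  have h : ((n:ℤ)+1) = ((n+1:ℕ):ℤ) := by push_cast; ring
  rw [h]
  unfold evF
  rw [Int.natAbs_natCast]
  norm_num

lemma evF_zero (lam t : ℝ) : evF lam t 0 = ((lam + 1/t : ℝ) : ℂ) := by simp [evF]

lemma eigen_of_root {μ lam t : ℝ} (ht0 : 0 < t) (ht1 : t < 1) (hr : cubF μ lam t = 0) :
    IsEvenEigenvalue μ lam (1 - (t + 1/t)/2) := by
  have htne : t ≠ 0 := ne_of_gt ht0
  set z : ℝ := 1 - (t + 1/t)/2 with hz
  -- real identities
  have hr' : (lam*t + 1) * (t^2 + 2*μ*t + 1) = 2*t^2 := by unfold cubF at hr; linarith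
  have key0 : (lam + 1/t) * (1 + μ - z) = 1 := by
    rw [hz]; field_simp; linear_combination hr'
  have key1 : 1 - (t + (lam + 1/t))/2 + lam/2 = z := by rw [hz]; field_simp; ring
  have key2 : t - (t^2+1)/2 = z*t := by rw [hz]; field_simp
  have key0C := congrArg Complex.ofReal key0
  push_cast at key0C
  have key1C := congrArg Complex.ofReal key1
  push_cast at key1C
  have key2C := congrArg Complex.ofReal key2
  push_cast at key2C
  refine ⟨⟨evF lam t, evF_memℓp ht0 ht1⟩, ?_, ?_, ?_⟩
  · intro h0
    have h1 : evF lam t 1 = 0 := by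
      have := congrArg (fun φ : lp (fun _ : ℤ => ℂ) 2 => φ 1) h0
      simpa using this
    rw [show (1:ℤ) = ((0:ℕ):ℤ)+1 by norm_num, evF_val] at h1
    simp at h1
  · intro x; exact evF_even lam t x
  · -- main equation
    have main : ∀ x : ℤ,
        evF lam t x - (evF lam t (x + 1) + evF lam t (x - 1)) / 2
          + (pot μ lam x : ℂ) * evF lam t x = (z : ℂ) * evF lam t x := by
      have hneg : ∀ m : ℤ,
          (evF lam t m - (evF lam t (m + 1) + evF lam t (m - 1)) / 2
            + (pot μ lam m : ℂ) * evF lam t m = (z : ℂ) * evF lam t m) →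
          (evF lam t (-m) - (evF lam t (-m + 1) + evF lam t (-m - 1)) / 2
            + (pot μ lam (-m) : ℂ) * evF lam t (-m) = (z : ℂ) * evF lam t (-m)) := by
        intro m h
        rw [show -m + 1 = -(m-1) by ring, show -m - 1 = -(m+1) by ring,
          evF_even, evF_even, evF_even, pot_neg]
        linear_combination h
      have hnat : ∀ n : ℕ,
          evF lam t (n:ℤ) - (evF lam t ((n:ℤ) + 1) + evF lam t ((n:ℤ) - 1)) / 2
            + (pot μ lam (n:ℤ) : ℂ) * evF lam t (n:ℤ) = (z : ℂ) * evF lam t (n:ℤ) := by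
        intro n
        match n with
        | 0 =>
          rw [show ((0:ℕ):ℤ) = 0 by norm_num]
          rw [show (0:ℤ) - 1 = -1 by norm_num, show (0:ℤ) + 1 = ((0:ℕ):ℤ)+1 by norm_num]
          rw [show (-1:ℤ) = -(((0:ℕ):ℤ)+1) by norm_num, evF_even]
          rw [evF_val, evF_zero]
          rw [show pot μ lam 0 = μ from by simp [pot]]
          push_cast
          linear_combination key0C
        | 1 =>
          rw [show ((1:ℕ):ℤ) = ((0:ℕ):ℤ)+1 by norm_num]
          rw [show ((0:ℕ):ℤ)+1+1 = ((1:ℕ):ℤ)+1 by norm_num]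
          rw [show ((0:ℕ):ℤ)+1-1 = 0 by norm_num]
          rw [evF_val, evF_val, evF_zero]
          rw [show pot μ lam (((0:ℕ):ℤ)+1) = lam/2 from by norm_num [pot]]
          push_cast
          linear_combination key1C - key0C*0
        | (n+2) =>
          rw [show ((n+2:ℕ):ℤ) = ((n+1:ℕ):ℤ)+1 by push_cast; ring]
          rw [show ((n+1:ℕ):ℤ)+1+1 = ((n+2:ℕ):ℤ)+1 by push_cast; ring]
          rw [show ((n+1:ℕ):ℤ)+1-1 = ((n:ℕ):ℤ)+1 by push_cast; ring]
          rw [evF_val, evF_val, evF_val]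
          rw [show pot μ lam (((n+1:ℕ):ℤ)+1) = 0 from by
            unfold pot
            rw [if_neg (by omega), if_neg (by omega)]]
          push_cast
          linear_combination ((t:ℂ)^n) * key2C
      intro x
      rcases Int.eq_nat_or_neg x with ⟨n, rfl | rfl⟩
      · exact hnat n
      · exact hneg n (hnat n)
    exact main

lemma psi_tendsto (ψ : lp (fun _ : ℤ => ℂ) 2) :
    Tendsto (fun n : ℕ => ψ (n:ℤ)) atTop (nhds 0) := by
  have hsum : Summable (fun x : ℤ => ‖ψ x‖ ^ (2:ENNReal).toReal) :=
    (lp.memℓp ψ).summable (by norm_num)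
  have h2 : Tendsto (fun n : ℕ => (n:ℤ)) atTop cofinite := by
    rw [← Nat.cofinite_eq_atTop]
    exact Function.Injective.tendsto_cofinite (fun a b h => by exact_mod_cast h)
  have h3 : Tendsto (fun n : ℕ => ‖ψ (n:ℤ)‖ ^ (2:ENNReal).toReal) atTop (nhds 0) :=
    (hsum.tendsto_cofinite_zero).comp h2
  have h4 : Tendsto (fun n : ℕ => ‖ψ (n:ℤ)‖) atTop (nhds 0) := by
    have h5 := h3.sqrt
    rw [Real.sqrt_zero] at h5
    refine h5.congr (fun n => ?_)
    rw [show (2:ENNReal).toReal = 2 by norm_num]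
    rw [show ‖ψ (n:ℤ)‖ ^ (2:ℝ) = ‖ψ (n:ℤ)‖ ^ (2:ℕ) by rw [← Real.rpow_natCast]; norm_num]
    exact Real.sqrt_sq (norm_nonneg _)
  exact tendsto_zero_iff_norm_tendsto_zero.2 h4

lemma root_of_eigen {μ lam z t : ℝ} (htne : t ≠ 0) (ht : |t| < 1)
    (hw : t + 1/t = 2*(1-z)) (h : IsEvenEigenvalue μ lam z) : cubF μ lam t = 0 := by
  obtain ⟨ψ, hψ0, hev, heq⟩ := h
  have htpos : 0 < |t| := abs_pos.2 htne
  -- recurrence for |x| ≥ 2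
  have hrec : ∀ n : ℕ, ψ ((n:ℤ)+3) = 2*((1-z:ℝ):ℂ)*ψ ((n:ℤ)+2) - ψ ((n:ℤ)+1) := by
    intro n
    have hx := heq ((n:ℤ)+2)
    rw [show pot μ lam ((n:ℤ)+2) = 0 from by
      unfold pot; rw [if_neg (by omega), if_neg (by omega)]] at hx
    push_cast at hx ⊢
    have : ψ ((n:ℤ)+2+1) + ψ ((n:ℤ)+2-1) = 2*(1-(z:ℂ)) * ψ ((n:ℤ)+2) := by
      linear_combination -2*hx
    rw [show (n:ℤ)+2+1 = (n:ℤ)+3 by ring, show (n:ℤ)+2-1 = (n:ℤ)+1 by ring] at this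
    push_cast at this
    linear_combination this
  -- the decaying component
  set φ : ℕ → ℂ := fun k => ψ ((k:ℤ)+2) - (t:ℂ)*ψ ((k:ℤ)+1) with hφdef
  have hstep : ∀ k : ℕ, φ (k+1) = (1/(t:ℂ)) * φ k := by
    intro k
    have h2wt : ((2*(1-z) - t : ℝ) : ℂ) = ((1/t : ℝ) : ℂ) := by
      norm_cast; linarith
    push_cast at h2wt
    simp only [hφdef]
    have hr := hrec k
    rw [show ((k+1:ℕ):ℤ)+2 = (k:ℤ)+3 by push_cast; ring,
        show ((k+1:ℕ):ℤ)+1 = (k:ℤ)+2 by push_cast; ring, hr]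
    push_cast
    have hts : (t:ℂ) ≠ 0 := by exact_mod_cast htne
    field_simp at h2wt ⊢
    linear_combination h2wt * ψ ((k:ℤ)+2)
  have hpowφ : ∀ k : ℕ, φ k = (1/(t:ℂ))^k * φ 0 := by
    intro k
    induction k with
    | zero => simp
    | succ k ih => rw [hstep k, ih]; ring
  -- φ 0 = 0
  have hφ0 : φ 0 = 0 := by
    by_contra hne
    have htend2 : Tendsto (fun k : ℕ => ψ ((k:ℤ)+2)) atTop (nhds 0) := by
      have := (psi_tendsto ψ).comp (tendsto_add_atTop_nat 2)
      refine this.congr (fun k => ?_)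
      simp only [Function.comp_apply]
      norm_num
    have htend1 : Tendsto (fun k : ℕ => ψ ((k:ℤ)+1)) atTop (nhds 0) := by
      have := (psi_tendsto ψ).comp (tendsto_add_atTop_nat 1)
      refine this.congr (fun k => ?_)
      simp only [Function.comp_apply]
      norm_num
    have hφtend : Tendsto φ atTop (nhds 0) := by
      have := htend2.sub (htend1.const_mul (t:ℂ))
      simpa using this
    have hnorm : ∀ k, ‖φ k‖ = (1/|t|)^k * ‖φ 0‖ := by
      intro k
      rw [hpowφ k, norm_mul, norm_pow]
      congr 2
      rw [norm_div, Complex.norm_real, Real.norm_eq_abs]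
      norm_num
    have hgt : 1 < 1/|t| := by
      rw [lt_div_iff₀ htpos]; linarith
    have hatop : Tendsto (fun k : ℕ => ‖φ k‖) atTop atTop := by
      have h1 := tendsto_pow_atTop_atTop_of_one_lt hgt
      have h2 := h1.atTop_mul_const (norm_pos_iff.2 hne)
      refine h2.congr (fun k => (hnorm k).symm)
    have h0' : Tendsto (fun k => ‖φ k‖) atTop (nhds 0) := by simpa using hφtend.norm
    exact not_tendsto_nhds_of_tendsto_atTop hatop 0 h0'
  -- geometric form
  have hgeo : ∀ k : ℕ, ψ ((k:ℤ)+2) = (t:ℂ)*ψ ((k:ℤ)+1) := by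
    intro k
    have hk := hpowφ k
    rw [hφ0, mul_zero] at hk
    have : φ k = 0 := hk
    rw [hφdef] at this
    have := sub_eq_zero.1 this
    exact this
  have hpow : ∀ n : ℕ, ψ ((n:ℤ)+1) = (t:ℂ)^n * ψ 1 := by
    intro n
    induction n with
    | zero => simp
    | succ n ih =>
      have hg := hgeo n
      rw [show ((n+1:ℕ):ℤ)+1 = (n:ℤ)+2 by push_cast; ring, hg, ih]
      ring
  -- boundary equations
  have h1 := heq 1
  rw [show (1:ℤ)+1 = ((1:ℕ):ℤ)+1 by norm_num, show (1:ℤ)-1 = 0 by norm_num,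
      show pot μ lam 1 = lam/2 by norm_num [pot], hpow 1] at h1
  have h0 := heq 0
  rw [show (0:ℤ)+1 = 1 by norm_num, show (0:ℤ)-1 = -1 by norm_num, hev 1,
      show pot μ lam 0 = μ by simp [pot]] at h0
  push_cast at h0 h1
  have hψ1ne : ψ 1 ≠ 0 := by
    intro hψ1
    apply hψ0
    have hz0 : ψ 0 = 0 := by
      linear_combination (-2)*h1 + (2 + (lam:ℂ) - (t:ℂ) - 2*(z:ℂ))*hψ1
    apply lp.ext
    funext x
    have hzero : ∀ x : ℤ, ψ x = 0 := by
      intro y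
      rcases Int.eq_nat_or_neg y with ⟨n, rfl | rfl⟩
      · match n with
        | 0 => exact_mod_cast hz0
        | (m+1) =>
          rw [show ((m+1:ℕ):ℤ) = (m:ℤ)+1 by push_cast; ring, hpow m, hψ1, mul_zero]
      · rw [hev]
        match n with
        | 0 => exact_mod_cast hz0
        | (m+1) =>
          rw [show ((m+1:ℕ):ℤ) = (m:ℤ)+1 by push_cast; ring, hpow m, hψ1, mul_zero]
    rw [hzero x]
    rfl
  have hwC : (t:ℂ) + (t:ℂ)⁻¹ = 2*(1-(z:ℂ)) := by
    have := congrArg Complex.ofReal hw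
    push_cast at this
    convert this using 2
    norm_num
  set c : ℝ := (1+μ-z)*(1/t+lam)-1 with hc
  have hcψ : ((c:ℝ):ℂ) * ψ 1 = 0 := by
    rw [hc]
    push_cast
    linear_combination h0 + (2*(1+(μ:ℂ)-(z:ℂ)))*h1 + ((1+(μ:ℂ)-(z:ℂ))*(ψ 1))*hwC
  have hc0 : c = 0 := by
    rcases mul_eq_zero.1 hcψ with h | h
    · exact_mod_cast h
    · exact absurd h hψ1ne
  rw [hc] at hc0
  have hc' : (1+μ-z)*(1+lam*t) = t := by
    field_simp at hc0
    linear_combination hc0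
  have hw' : t^2 + 1 = (2-2*z)*t := by
    field_simp at hw
    linear_combination hw
  unfold cubF
  linear_combination (lam*t+1)*hw' + 2*t*hc'

/-- Region `G_{10}`: assume either `μλ + μ + λ < 0` or (`μλ + μ + λ = 0` and `μ < −1`),
and `μ < 1` with `μλ − μ − λ ≥ 0`. Then `H_{μλ}` has no even eigenvalue in `(2, +∞)`,
and it has exactly one even eigenvalue outside `[0,2]`, which lies in `(−∞, 0)`. -/
theorem region_G10 (μ lam : ℝ)
    (h1 : μ * lam + μ + lam < 0 ∨ (μ * lam + μ + lam = 0 ∧ μ < -1))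
    (h2 : μ < 1) (h3 : 0 ≤ μ * lam - μ - lam) :
    (∀ z : ℝ, 2 < z → ¬ IsEvenEigenvalue μ lam z) ∧
    ∃ ζ : ℝ, ζ < 0 ∧ IsEvenEigenvalue μ lam ζ ∧
      ∀ z : ℝ, (z < 0 ∨ 2 < z) → IsEvenEigenvalue μ lam z → z = ζ := by
  have hpart1 : ∀ z : ℝ, 2 < z → ¬ IsEvenEigenvalue μ lam z := by
    intro z hz hE
    set w : ℝ := 1 - z with hwdef
    have hw1 : w < -1 := by rw [hwdef]; linarith
    have hsnn : (0:ℝ) ≤ w^2 - 1 := by nlinarith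
    set s : ℝ := Real.sqrt (w^2-1) with hsdef
    have hs2 : s^2 = w^2-1 := Real.sq_sqrt hsnn
    have hs0 : (0:ℝ) ≤ s := Real.sqrt_nonneg _
    set t : ℝ := w + s with htdef
    have ht0 : t < 0 := by nlinarith
    have ht1 : -1 < t := by nlinarith
    have htne : t ≠ 0 := ne_of_lt ht0
    have htmul : t * (w - s) = 1 := by rw [htdef]; nlinarith
    have htinv : t + 1/t = 2*(1-z) := by
      have h1t : 1/t = w - s := by
        field_simp
        linarith [htmul]
      rw [h1t, htdef, hwdef]
      ring
    have hroot := root_of_eigen htne (abs_lt.2 ⟨by linarith, by linarith⟩) htinv hE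
    have := no_neg_root h2 h3 ht1 ht0
    linarith
  refine ⟨hpart1, ?_⟩
  obtain ⟨t₀, ht₀m, hr₀⟩ := exists_root h1
  obtain ⟨ht₀0, ht₀1⟩ := Set.mem_Ioo.1 ht₀m
  refine ⟨1 - (t₀ + 1/t₀)/2, ?_, eigen_of_root ht₀0 ht₀1 hr₀, ?_⟩
  · have hgt : 2 < t₀ + 1/t₀ := by
      have hkey : t₀ + 1/t₀ - 2 = (1-t₀)^2/t₀ := by field_simp; ring
      have : (0:ℝ) < (1-t₀)^2/t₀ := div_pos (by nlinarith) ht₀0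
      linarith
    linarith
  · intro z hz hE
    rcases hz with hlt | hgt
    · set w : ℝ := 1 - z with hwdef
      have hw1 : 1 < w := by rw [hwdef]; linarith
      have hsnn : (0:ℝ) ≤ w^2 - 1 := by nlinarith
      set s : ℝ := Real.sqrt (w^2-1) with hsdef
      have hs2 : s^2 = w^2-1 := Real.sq_sqrt hsnn
      have hs0 : (0:ℝ) ≤ s := Real.sqrt_nonneg _
      set t : ℝ := w - s with htdef
      have htmul : t * (w + s) = 1 := by rw [htdef]; nlinarith
      have ht0 : 0 < t := by nlinarith
      have ht1 : t < 1 := by nlinarith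
      have htne : t ≠ 0 := ne_of_gt ht0
      have htinv : t + 1/t = 2*(1-z) := by
        have h1t : 1/t = w + s := by
          field_simp
          linarith [htmul]
        rw [h1t, htdef, hwdef]
        ring
      have hroot := root_of_eigen htne (abs_lt.2 ⟨by linarith, by linarith⟩) htinv hE
      have heqt : t = t₀ := unique_root h1 ht0 ht1 ht₀0 ht₀1 hroot hr₀
      rw [← heqt]
      have : 1 - (t + 1/t)/2 = z := by rw [htinv]; ring
      linarith
    · exact absurd hE (hpart1 z hgt)
end
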